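/- Let μ be a Borel measure on ℝ with continuous density φ (with respect to Lebesgue measure) such that for every compact closed interval K ⊂ ℝ and every compact closed interval L ⊂ ℝ containing 0, one has μ⁺(∂(K+L)) ≥ μ⁺(∂K). Then μ is a constant multiple of the Lebesgue measure (i.e. φ is constant). -/

import Mathlib

open MeasureTheory Set Filter Topology Pointwise

noncomputable section

/-- The weighted surface area (outer Minkowski content) of `A ⊆ ℝ` with respect to `μ`:
`μ⁺(∂A) = liminf_{ε→0⁺} (μ(A + εB₂¹) − μ(A))/ε`, where `B₂¹` is the closed unit ball. -/
def weightedSurfaceArea1 (μ : Measure ℝ) (A : Set ℝ) : ℝ :=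
  Filter.liminf
    (fun ε : ℝ =>
      ((μ (A + ε • Metric.closedBall (0 : ℝ) 1)).toReal - (μ A).toReal) / ε)
    (𝓝[>] 0)

lemma my_Icc_add_Icc {a b c d : ℝ} (hab : a ≤ b) (hcd : c ≤ d) :
    Icc a b + Icc c d = Icc (a + c) (b + d) := by
  apply Subset.antisymm (Set.Icc_add_Icc_subset a b c d)
  rintro x ⟨h1, h2⟩
  refine ⟨max a (x - d), ⟨le_max_left _ _, max_le hab (by linarith)⟩,
    x - max a (x - d), ⟨?_, ?_⟩, by ring⟩
  · rcases max_cases a (x - d) with ⟨h, _⟩ | ⟨h, _⟩ <;> rw [h] <;> linarith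
  · rcases max_cases a (x - d) with ⟨h, _⟩ | ⟨h, _⟩ <;> rw [h] <;> linarith

lemma surface_eq (φ : ℝ → ℝ) (hφcont : Continuous φ) (hφnonneg : ∀ x, 0 ≤ φ x)
    (μ : Measure ℝ) (hμ : μ = volume.withDensity fun x => ENNReal.ofReal (φ x))
    {a b : ℝ} (hab : a ≤ b) :
    weightedSurfaceArea1 μ (Icc a b) = φ a + φ b := by
  set H : ℝ → ℝ := fun x => ∫ t in (0:ℝ)..x, φ t with hH
  have hμIcc : ∀ x y : ℝ, (μ (Icc x y)).toReal = H y - H x ∨ ¬ x ≤ y := by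
    intro x y
    by_cases hxy : x ≤ y
    · left
      have h1 : μ (Icc x y) = ∫⁻ t in Icc x y, ENNReal.ofReal (φ t) := by
        rw [hμ, withDensity_apply _ measurableSet_Icc]
      have h2 : (∫⁻ t in Icc x y, ENNReal.ofReal (φ t)).toReal
          = ∫ t in Icc x y, φ t := by
        rw [← integral_eq_lintegral_of_nonneg_ae (ae_of_all _ hφnonneg)
          hφcont.aestronglyMeasurable.restrict]
      rw [h1, h2, integral_Icc_eq_integral_Ioc,
        ← intervalIntegral.integral_of_le hxy, hH]
      rw [← intervalIntegral.integral_interval_sub_left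
        (hφcont.intervalIntegrable _ _) (hφcont.intervalIntegrable _ _)]
    · right; exact hxy
  have hμIcc' : ∀ x y : ℝ, x ≤ y → (μ (Icc x y)).toReal = H y - H x := by
    intro x y hxy
    rcases hμIcc x y with h | h
    · exact h
    · exact absurd hxy h
  -- derivative facts
  have hHa : HasDerivAt H (φ a) a := (hφcont.integral_hasStrictDerivAt 0 a).hasDerivAt
  have hHb : HasDerivAt H (φ b) b := (hφcont.integral_hasStrictDerivAt 0 b).hasDerivAt
  -- limit along 𝓝[>] 0
  have hmapb : Tendsto (fun ε : ℝ => b + ε) (𝓝[>] (0:ℝ)) (𝓝[≠] b) := by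
    rw [tendsto_nhdsWithin_iff]
    constructor
    · have : Tendsto (fun ε : ℝ => b + ε) (𝓝 0) (𝓝 b) := by
        simpa using (continuous_add_left b).tendsto (0:ℝ)
      exact this.mono_left nhdsWithin_le_nhds
    · filter_upwards [self_mem_nhdsWithin] with ε (hε : ε ∈ Ioi (0:ℝ))
      simp only [mem_compl_iff, mem_singleton_iff]
      intro h
      rw [mem_Ioi] at hε; nlinarith [h]
  have hmapa : Tendsto (fun ε : ℝ => a - ε) (𝓝[>] (0:ℝ)) (𝓝[≠] a) := by
    rw [tendsto_nhdsWithin_iff]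
    constructor
    · have : Tendsto (fun ε : ℝ => a - ε) (𝓝 0) (𝓝 a) := by
        simpa using (continuous_sub_left a).tendsto (0:ℝ)
      exact this.mono_left nhdsWithin_le_nhds
    · filter_upwards [self_mem_nhdsWithin] with ε (hε : ε ∈ Ioi (0:ℝ))
      simp only [mem_compl_iff, mem_singleton_iff]
      intro h
      rw [mem_Ioi] at hε; nlinarith [h]
  have hslopeb : Tendsto (fun ε : ℝ => (H (b + ε) - H b) / ε) (𝓝[>] (0:ℝ)) (𝓝 (φ b)) := by
    have := (hasDerivAt_iff_tendsto_slope.mp hHb).comp hmapb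
    refine this.congr (fun ε => ?_)
    simp [slope, Function.comp, vsub_eq_sub, add_sub_cancel_left, div_eq_inv_mul]
  have hslopea : Tendsto (fun ε : ℝ => (H a - H (a - ε)) / ε) (𝓝[>] (0:ℝ)) (𝓝 (φ a)) := by
    have := (hasDerivAt_iff_tendsto_slope.mp hHa).comp hmapa
    refine this.congr (fun ε => ?_)
    simp only [slope, Function.comp_apply, vsub_eq_sub]
    rw [show a - ε - a = -ε by ring, smul_eq_mul, ← div_eq_inv_mul, div_neg, ← neg_div, neg_sub]
  have htend : Tendsto
      (fun ε : ℝ =>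
        ((μ (Icc a b + ε • Metric.closedBall (0 : ℝ) 1)).toReal - (μ (Icc a b)).toReal) / ε)
      (𝓝[>] (0:ℝ)) (𝓝 (φ a + φ b)) := by
    have heq : ∀ᶠ ε in 𝓝[>] (0:ℝ),
        (H a - H (a - ε)) / ε + (H (b + ε) - H b) / ε
          = ((μ (Icc a b + ε • Metric.closedBall (0 : ℝ) 1)).toReal - (μ (Icc a b)).toReal) / ε := by
      filter_upwards [self_mem_nhdsWithin] with ε (hε : 0 < ε)
      have hball : ε • Metric.closedBall (0 : ℝ) 1 = Icc (-ε) ε := by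
        rw [smul_unitClosedBall, Real.norm_of_nonneg hε.le, Real.closedBall_eq_Icc]
        norm_num
      rw [hball, my_Icc_add_Icc hab (by linarith),
        hμIcc' _ _ (by linarith), hμIcc' _ _ hab]
      have : a + -ε = a - ε := by ring
      rw [this]
      field_simp
      ring
    exact Tendsto.congr' heq (hslopea.add hslopeb)
  have : NeBot (𝓝[>] (0:ℝ)) := nhdsGT_neBot 0
  exact htend.liminf_eq

/-- If a Borel measure on `ℝ` with continuous density `φ` satisfies
`μ⁺(∂(K+L)) ≥ μ⁺(∂K)` for every compact interval `K` and every compact interval `L`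
containing `0`, then `μ` is a constant multiple of the Lebesgue measure
(i.e. `φ` is constant). -/
theorem dimension_one_weak_supermodularity_implies_constant_density
    (φ : ℝ → ℝ) (hφcont : Continuous φ) (hφnonneg : ∀ x, 0 ≤ φ x)
    (μ : Measure ℝ) (hμ : μ = volume.withDensity fun x => ENNReal.ofReal (φ x))
    (hsur : ∀ a b c d : ℝ, a ≤ b → c ≤ 0 → 0 ≤ d →
      weightedSurfaceArea1 μ (Icc a b) ≤ weightedSurfaceArea1 μ (Icc a b + Icc c d)) :
    ∃ C : ℝ, ∀ x, φ x = C := by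
  have key : ∀ a b c d : ℝ, a ≤ b → c ≤ 0 → 0 ≤ d →
      φ a + φ b ≤ φ (a + c) + φ (b + d) := by
    intro a b c d hab hc hd
    have h := hsur a b c d hab hc hd
    rw [surface_eq φ hφcont hφnonneg μ hμ hab] at h
    rw [my_Icc_add_Icc hab (hc.trans hd)] at h
    rwa [surface_eq φ hφcont hφnonneg μ hμ (by linarith)] at h
  have hanti : ∀ x y : ℝ, x ≤ y → φ y ≤ φ x := by
    intro x y hxy
    have := key y y (x - y) 0 le_rfl (by linarith) le_rfl
    simp only [add_zero] at this
    have hx : y + (x - y) = x := by ring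
    rw [hx] at this; linarith
  have hmono : ∀ x y : ℝ, x ≤ y → φ x ≤ φ y := by
    intro x y hxy
    have := key x x 0 (y - x) le_rfl le_rfl (by linarith)
    simp only [add_zero] at this
    have hx : x + (y - x) = y := by ring
    rw [hx] at this; linarith
  refine ⟨φ 0, fun x => ?_⟩
  rcases le_total x 0 with h | h
  · exact le_antisymm (hmono x 0 h) (hanti x 0 h)
  · exact le_antisymm (hanti 0 x h) (hmono 0 x h)
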